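/- Let D ⊆ ℝ² be open and connected, l : D → ℝ⁴ a smooth isothermal parametrization of a minimal surface in S³ (⟨l,l⟩ = 1, ⟨l_u,l_u⟩ = ⟨l_v,l_v⟩ = E > 0, ⟨l_u,l_v⟩ = 0, Δl + 2E·l = 0), and n : D → ℝ⁴ a smooth unit normal (⟨n,n⟩ = 1, ⟨n,l⟩ = ⟨n,l_u⟩ = ⟨n,l_v⟩ = 0). Define a = ⟨l_{uu}, n⟩ and b = ⟨l_{uv}, n⟩. Then b_u = a_v and b_v = −a_u on D; in particular a and b are harmonic functions. -/

import Mathlib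

open Real
open scoped InnerProductSpace

noncomputable section

/-- ℝ⁴ with the standard Euclidean inner product. -/
abbrev E4 := EuclideanSpace ℝ (Fin 4)

/-- Partial derivative with respect to the first parameter. -/
def pu {F : Type*} [NormedAddCommGroup F] [NormedSpace ℝ F]
    (f : ℝ × ℝ → F) (p : ℝ × ℝ) : F := fderiv ℝ f p (1, 0)

/-- Partial derivative with respect to the second parameter. -/
def pv {F : Type*} [NormedAddCommGroup F] [NormedSpace ℝ F]
    (f : ℝ × ℝ → F) (p : ℝ × ℝ) : F := fderiv ℝ f p (0, 1)

section Helpers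

variable {F : Type*} [NormedAddCommGroup F] [NormedSpace ℝ F] {D : Set (ℝ × ℝ)}
  {f g : ℝ × ℝ → F} {p : ℝ × ℝ}

lemma one_le_cast_top : (1 : WithTop ℕ∞) ≤ ↑(⊤:ℕ∞) := by
  have : ((1:ℕ∞) : WithTop ℕ∞) ≤ ↑(⊤:ℕ∞) := by exact_mod_cast (le_top : (1:ℕ∞) ≤ ⊤)
  simpa using this

lemma two_le_cast_top : (2 : WithTop ℕ∞) ≤ ↑(⊤:ℕ∞) := by
  have : ((2:ℕ∞) : WithTop ℕ∞) ≤ ↑(⊤:ℕ∞) := by exact_mod_cast (le_top : (2:ℕ∞) ≤ ⊤)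
  simpa using this

lemma top_add_one_le : (↑(⊤:ℕ∞) : WithTop ℕ∞) + 1 ≤ ↑(⊤:ℕ∞) := by
  exact_mod_cast (by simp : (⊤:ℕ∞)+1 ≤ ⊤)

lemma diffAt_of_cd (hD : IsOpen D) (hf : ContDiffOn ℝ (⊤ : ℕ∞) f D) (hp : p ∈ D) :
    DifferentiableAt ℝ f p :=
  (hf.contDiffAt (hD.mem_nhds hp)).differentiableAt (by simp)

lemma cd_pd (hD : IsOpen D) (hf : ContDiffOn ℝ (⊤ : ℕ∞) f D) (w : ℝ × ℝ) :
    ContDiffOn ℝ (⊤ : ℕ∞) (fun q => fderiv ℝ f q w) D :=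
  (hf.fderiv_of_isOpen hD top_add_one_le).clm_apply contDiffOn_const

lemma cd_pu (hD : IsOpen D) (hf : ContDiffOn ℝ (⊤ : ℕ∞) f D) :
    ContDiffOn ℝ (⊤ : ℕ∞) (pu f) D := cd_pd hD hf (1, 0)

lemma cd_pv (hD : IsOpen D) (hf : ContDiffOn ℝ (⊤ : ℕ∞) f D) :
    ContDiffOn ℝ (⊤ : ℕ∞) (pv f) D := cd_pd hD hf (0, 1)

lemma pd_congr (hD : IsOpen D) (h : ∀ q ∈ D, f q = g q) (hp : p ∈ D) (w : ℝ × ℝ) :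
    fderiv ℝ f p w = fderiv ℝ g p w := by
  rw [(Filter.eventuallyEq_of_mem (hD.mem_nhds hp) h).fderiv_eq]

lemma schwarz (hD : IsOpen D) (hf : ContDiffOn ℝ (⊤ : ℕ∞) f D) (hp : p ∈ D) (v w : ℝ × ℝ) :
    fderiv ℝ (fun q => fderiv ℝ f q v) p w = fderiv ℝ (fun q => fderiv ℝ f q w) p v := by
  have hsym : IsSymmSndFDerivAt ℝ f p :=
    (hf.contDiffAt (hD.mem_nhds hp)).isSymmSndFDerivAt (by simpa [minSmoothness_of_isRCLikeNormedField] using two_le_cast_top)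
  have hdf : DifferentiableAt ℝ (fderiv ℝ f) p :=
    diffAt_of_cd hD (hf.fderiv_of_isOpen hD top_add_one_le) hp
  have key : ∀ v w : ℝ × ℝ, fderiv ℝ (fun q => fderiv ℝ f q v) p w
      = fderiv ℝ (fderiv ℝ f) p w v := by
    intro v w
    rw [show (fun q => fderiv ℝ f q v)
        = ⇑(ContinuousLinearMap.apply ℝ F v) ∘ fderiv ℝ f from rfl,
      ((ContinuousLinearMap.apply ℝ F v).hasFDerivAt.comp p hdf.hasFDerivAt).fderiv]
    rfl
  rw [key, key, hsym w v]

lemma schwarz_pupv (hD : IsOpen D) (hf : ContDiffOn ℝ (⊤ : ℕ∞) f D) (hp : p ∈ D) :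
    pu (pv f) p = pv (pu f) p := schwarz hD hf hp (0, 1) (1, 0)

end Helpers

section InnerHelpers

variable {D : Set (ℝ × ℝ)} {f g : ℝ × ℝ → E4} {p : ℝ × ℝ}

lemma d_inner_eq (hD : IsOpen D) (hp : p ∈ D)
    (hf : DifferentiableAt ℝ f p) (hg : DifferentiableAt ℝ g p) {c : ℝ × ℝ → ℝ}
    (h : ∀ q ∈ D, ⟪f q, g q⟫_ℝ = c q) (w : ℝ × ℝ) :
    ⟪f p, fderiv ℝ g p w⟫_ℝ + ⟪fderiv ℝ f p w, g p⟫_ℝ = fderiv ℝ c p w := by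
  rw [← fderiv_inner_apply (𝕜 := ℝ) hf hg w]
  exact pd_congr hD h hp w

lemma d_inner_zero (hD : IsOpen D) (hp : p ∈ D)
    (hf : DifferentiableAt ℝ f p) (hg : DifferentiableAt ℝ g p)
    (h : ∀ q ∈ D, ⟪f q, g q⟫_ℝ = 0) (w : ℝ × ℝ) :
    ⟪f p, fderiv ℝ g p w⟫_ℝ + ⟪fderiv ℝ f p w, g p⟫_ℝ = 0 := by
  have := d_inner_eq hD hp hf hg (c := fun _ => (0:ℝ)) h w
  rwa [fderiv_const_apply, ContinuousLinearMap.zero_apply] at this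

lemma d_inner_one (hD : IsOpen D) (hp : p ∈ D)
    (hf : DifferentiableAt ℝ f p) (hg : DifferentiableAt ℝ g p)
    (h : ∀ q ∈ D, ⟪f q, g q⟫_ℝ = 1) (w : ℝ × ℝ) :
    ⟪f p, fderiv ℝ g p w⟫_ℝ + ⟪fderiv ℝ f p w, g p⟫_ℝ = 0 := by
  have := d_inner_eq hD hp hf hg (c := fun _ => (1:ℝ)) h w
  rwa [fderiv_const_apply, ContinuousLinearMap.zero_apply] at this

lemma parseval4 {lp lu lv np : E4} {Ep : ℝ} (hEp : 0 < Ep)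
    (h1 : ⟪lp,lp⟫_ℝ = 1) (h2 : ⟪lu,lu⟫_ℝ = Ep) (h3 : ⟪lv,lv⟫_ℝ = Ep)
    (h4 : ⟪lu,lv⟫_ℝ = 0) (h5 : ⟪np,np⟫_ℝ = 1) (h6 : ⟪np,lp⟫_ℝ = 0)
    (h7 : ⟪np,lu⟫_ℝ = 0) (h8 : ⟪np,lv⟫_ℝ = 0) (h9 : ⟪lu,lp⟫_ℝ = 0) (h10 : ⟪lv,lp⟫_ℝ = 0)
    (x y : E4) :
    ⟪x,y⟫_ℝ = ⟪x,lp⟫_ℝ * ⟪lp,y⟫_ℝ + (⟪x,lu⟫_ℝ * ⟪lu,y⟫_ℝ + ⟪x,lv⟫_ℝ * ⟪lv,y⟫_ℝ)/Ep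
      + ⟪x,np⟫_ℝ * ⟪np,y⟫_ℝ := by
  set s : ℝ := Real.sqrt Ep with hs
  have hspos : 0 < s := Real.sqrt_pos.mpr hEp
  have hss : s * s = Ep := Real.mul_self_sqrt hEp.le
  have hinv : s⁻¹ * s⁻¹ = Ep⁻¹ := by rw [← mul_inv, hss]
  set e : Fin 4 → E4 := ![lp, s⁻¹ • lu, s⁻¹ • lv, np] with he
  have key : ∀ z w : E4, ∀ c : ℝ, ⟪z, w⟫_ℝ = c →
      ⟪s⁻¹ • z, s⁻¹ • w⟫_ℝ = Ep⁻¹ * c := by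
    intro z w c h
    rw [real_inner_smul_left, real_inner_smul_right, h, ← mul_assoc, hinv]
  have hon : Orthonormal ℝ e := by
    rw [orthonormal_iff_ite]
    intro i j
    fin_cases i <;> fin_cases j
    · rw [if_pos rfl]; exact h1
    · rw [if_neg (by decide)]
      show ⟪lp, s⁻¹ • lu⟫_ℝ = 0
      rw [real_inner_smul_right, real_inner_comm, h9, mul_zero]
    · rw [if_neg (by decide)]
      show ⟪lp, s⁻¹ • lv⟫_ℝ = 0
      rw [real_inner_smul_right, real_inner_comm, h10, mul_zero]
    · rw [if_neg (by decide)]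
      show ⟪lp, np⟫_ℝ = 0
      rw [real_inner_comm]; exact h6
    · rw [if_neg (by decide)]
      show ⟪s⁻¹ • lu, lp⟫_ℝ = 0
      rw [real_inner_smul_left, h9, mul_zero]
    · rw [if_pos rfl]
      show ⟪s⁻¹ • lu, s⁻¹ • lu⟫_ℝ = 1
      rw [key _ _ _ h2, inv_mul_cancel₀ hEp.ne']
    · rw [if_neg (by decide)]
      show ⟪s⁻¹ • lu, s⁻¹ • lv⟫_ℝ = 0
      rw [key _ _ _ h4, mul_zero]
    · rw [if_neg (by decide)]
      show ⟪s⁻¹ • lu, np⟫_ℝ = 0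
      rw [real_inner_smul_left, real_inner_comm, h7, mul_zero]
    · rw [if_neg (by decide)]
      show ⟪s⁻¹ • lv, lp⟫_ℝ = 0
      rw [real_inner_smul_left, h10, mul_zero]
    · rw [if_neg (by decide)]
      show ⟪s⁻¹ • lv, s⁻¹ • lu⟫_ℝ = 0
      have h4' : ⟪lv,lu⟫_ℝ = 0 := by rw [real_inner_comm]; exact h4
      rw [key _ _ _ h4', mul_zero]
    · rw [if_pos rfl]
      show ⟪s⁻¹ • lv, s⁻¹ • lv⟫_ℝ = 1
      rw [key _ _ _ h3, inv_mul_cancel₀ hEp.ne']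
    · rw [if_neg (by decide)]
      show ⟪s⁻¹ • lv, np⟫_ℝ = 0
      rw [real_inner_smul_left, real_inner_comm, h8, mul_zero]
    · rw [if_neg (by decide)]
      show ⟪np, lp⟫_ℝ = 0
      exact h6
    · rw [if_neg (by decide)]
      show ⟪np, s⁻¹ • lu⟫_ℝ = 0
      rw [real_inner_smul_right, h7, mul_zero]
    · rw [if_neg (by decide)]
      show ⟪np, s⁻¹ • lv⟫_ℝ = 0
      rw [real_inner_smul_right, h8, mul_zero]
    · rw [if_pos rfl]; exact h5
  have hsp : ⊤ ≤ Submodule.span ℝ (Set.range e) := by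
    rw [hon.linearIndependent.span_eq_top_of_card_eq_finrank (by simp)]
  have hb : ⇑(OrthonormalBasis.mk hon hsp) = e := OrthonormalBasis.coe_mk hon hsp
  have hsum := (OrthonormalBasis.mk hon hsp).sum_inner_mul_inner x y
  rw [hb] at hsum
  rw [← hsum, Fin.sum_univ_four]
  show ⟪x,lp⟫_ℝ * ⟪lp,y⟫_ℝ + ⟪x, s⁻¹ • lu⟫_ℝ * ⟪s⁻¹ • lu, y⟫_ℝ
      + ⟪x, s⁻¹ • lv⟫_ℝ * ⟪s⁻¹ • lv, y⟫_ℝ + ⟪x,np⟫_ℝ * ⟪np,y⟫_ℝ = _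
  simp only [real_inner_smul_left, real_inner_smul_right]
  have hmul : ∀ C D : ℝ, (s⁻¹ * C) * (s⁻¹ * D) = C * D / Ep := by
    intro C D; rw [div_eq_mul_inv, ← hinv]; ring
  rw [hmul, hmul]; ring

end InnerHelpers

set_option maxHeartbeats 1000000 in
/-- for a minimal surface in `S³` in isothermal parameters with unit normal `n`,
the coefficients `a = ⟨l_{uu}, n⟩` and `b = ⟨l_{uv}, n⟩` satisfy the Cauchy–Riemann
conditions `b_u = a_v`, `b_v = −a_u`; in particular `a` and `b` are harmonic. -/
theorem stmt_1 (D : Set (ℝ × ℝ)) (hD : IsOpen D) (hDconn : IsConnected D)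
    (E : ℝ × ℝ → ℝ) (l n : ℝ × ℝ → E4)
    (hE : ContDiffOn ℝ (⊤ : ℕ∞) E D) (hEpos : ∀ p ∈ D, 0 < E p)
    (hl : ContDiffOn ℝ (⊤ : ℕ∞) l D) (hn : ContDiffOn ℝ (⊤ : ℕ∞) n D)
    (hunit : ∀ p ∈ D, ⟪l p, l p⟫_ℝ = 1)
    (hEu : ∀ p ∈ D, ⟪pu l p, pu l p⟫_ℝ = E p)
    (hEv : ∀ p ∈ D, ⟪pv l p, pv l p⟫_ℝ = E p)
    (hF : ∀ p ∈ D, ⟪pu l p, pv l p⟫_ℝ = 0)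
    (hmin : ∀ p ∈ D, pu (pu l) p + pv (pv l) p + (2 * E p) • l p = 0)
    (hn1 : ∀ p ∈ D, ⟪n p, n p⟫_ℝ = 1)
    (hnl : ∀ p ∈ D, ⟪n p, l p⟫_ℝ = 0)
    (hnu : ∀ p ∈ D, ⟪n p, pu l p⟫_ℝ = 0)
    (hnv : ∀ p ∈ D, ⟪n p, pv l p⟫_ℝ = 0)
    (a b : ℝ × ℝ → ℝ)
    (ha : ∀ p, a p = ⟪pu (pu l) p, n p⟫_ℝ)
    (hb : ∀ p, b p = ⟪pv (pu l) p, n p⟫_ℝ) :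
    ∀ p ∈ D,
      pu b p = pv a p ∧ pv b p = -(pu a p) ∧
      pu (pu a) p + pv (pv a) p = 0 ∧ pu (pu b) p + pv (pv b) p = 0 := by
  -- smoothness of derivatives
  have cdlu : ContDiffOn ℝ (⊤:ℕ∞) (pu l) D := cd_pu hD hl
  have cdlv : ContDiffOn ℝ (⊤:ℕ∞) (pv l) D := cd_pv hD hl
  have cdluu : ContDiffOn ℝ (⊤:ℕ∞) (pu (pu l)) D := cd_pu hD cdlu
  have cdluv : ContDiffOn ℝ (⊤:ℕ∞) (pv (pu l)) D := cd_pv hD cdlu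
  have cdlvv : ContDiffOn ℝ (⊤:ℕ∞) (pv (pv l)) D := cd_pv hD cdlv
  have cda : ContDiffOn ℝ (⊤:ℕ∞) a D := by
    rw [funext ha]; exact cdluu.inner ℝ hn
  have cdb : ContDiffOn ℝ (⊤:ℕ∞) b D := by
    rw [funext hb]; exact cdluv.inner ℝ hn
  -- pointwise differentiablity
  have dl : ∀ q ∈ D, DifferentiableAt ℝ l q := fun q hq => diffAt_of_cd hD hl hq
  have dlu : ∀ q ∈ D, DifferentiableAt ℝ (pu l) q := fun q hq => diffAt_of_cd hD cdlu hq
  have dlv : ∀ q ∈ D, DifferentiableAt ℝ (pv l) q := fun q hq => diffAt_of_cd hD cdlv hq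
  have dn : ∀ q ∈ D, DifferentiableAt ℝ n q := fun q hq => diffAt_of_cd hD hn hq
  have dluu : ∀ q ∈ D, DifferentiableAt ℝ (pu (pu l)) q := fun q hq => diffAt_of_cd hD cdluu hq
  have dluv : ∀ q ∈ D, DifferentiableAt ℝ (pv (pu l)) q := fun q hq => diffAt_of_cd hD cdluv hq
  have dE : ∀ q ∈ D, DifferentiableAt ℝ E q := fun q hq => diffAt_of_cd hD hE hq
  -- mixed partials of l agree on D
  have hswD : ∀ q ∈ D, pu (pv l) q = pv (pu l) q := fun q hq => schwarz_pupv hD hl hq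
  -- first-order orthogonality relations, valid on all of D
  have hlul : ∀ q ∈ D, ⟪pu l q, l q⟫_ℝ = 0 := by
    intro q hq
    have h := d_inner_one hD hq (dl q hq) (dl q hq) hunit (1,0)
    have hc : ⟪l q, pu l q⟫_ℝ = ⟪pu l q, l q⟫_ℝ := real_inner_comm _ _
    have h' : ⟪l q, pu l q⟫_ℝ + ⟪pu l q, l q⟫_ℝ = 0 := h
    linarith
  have hlvl : ∀ q ∈ D, ⟪pv l q, l q⟫_ℝ = 0 := by
    intro q hq
    have h := d_inner_one hD hq (dl q hq) (dl q hq) hunit (0,1)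
    have hc : ⟪l q, pv l q⟫_ℝ = ⟪pv l q, l q⟫_ℝ := real_inner_comm _ _
    have h' : ⟪l q, pv l q⟫_ℝ + ⟪pv l q, l q⟫_ℝ = 0 := h
    linarith
  -- the Cauchy–Riemann equations on D
  have CR : ∀ p ∈ D, pu b p = pv a p ∧ pv b p = -(pu a p) := by
    intro p hp
    have hEp : 0 < E p := hEpos p hp
    have hsw : pu (pv l) p = pv (pu l) p := hswD p hp
    set Eu : ℝ := fderiv ℝ E p (1,0) with hEu'
    set Ev : ℝ := fderiv ℝ E p (0,1) with hEv'
    -- second-derivative inner products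
    have xl1 : ⟪pv (pu l) p, l p⟫_ℝ = 0 := by
      have h : ⟪pu l p, pv l p⟫_ℝ + ⟪pv (pu l) p, l p⟫_ℝ = 0 :=
        d_inner_zero hD hp (dlu p hp) (dl p hp) hlul (0,1)
      have := hF p hp; linarith
    have xl2 : ⟪pu (pu l) p, l p⟫_ℝ = -(E p) := by
      have h : ⟪pu l p, pu l p⟫_ℝ + ⟪pu (pu l) p, l p⟫_ℝ = 0 :=
        d_inner_zero hD hp (dlu p hp) (dl p hp) hlul (1,0)
      have := hEu p hp; linarith
    have xu1 : ⟪pv (pu l) p, pu l p⟫_ℝ = Ev/2 := by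
      have h : ⟪pu l p, pv (pu l) p⟫_ℝ + ⟪pv (pu l) p, pu l p⟫_ℝ = Ev :=
        d_inner_eq hD hp (dlu p hp) (dlu p hp) hEu (0,1)
      have hc : ⟪pu l p, pv (pu l) p⟫_ℝ = ⟪pv (pu l) p, pu l p⟫_ℝ := real_inner_comm _ _
      linarith
    have xu2 : ⟪pu (pu l) p, pu l p⟫_ℝ = Eu/2 := by
      have h : ⟪pu l p, pu (pu l) p⟫_ℝ + ⟪pu (pu l) p, pu l p⟫_ℝ = Eu :=
        d_inner_eq hD hp (dlu p hp) (dlu p hp) hEu (1,0)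
      have hc : ⟪pu l p, pu (pu l) p⟫_ℝ = ⟪pu (pu l) p, pu l p⟫_ℝ := real_inner_comm _ _
      linarith
    have xv1 : ⟪pv (pu l) p, pv l p⟫_ℝ = Eu/2 := by
      have h : ⟪pv l p, pu (pv l) p⟫_ℝ + ⟪pu (pv l) p, pv l p⟫_ℝ = Eu :=
        d_inner_eq hD hp (dlv p hp) (dlv p hp) hEv (1,0)
      rw [hsw] at h
      have hc : ⟪pv l p, pv (pu l) p⟫_ℝ = ⟪pv (pu l) p, pv l p⟫_ℝ := real_inner_comm _ _
      linarith
    have xv2 : ⟪pu (pu l) p, pv l p⟫_ℝ = -(Ev/2) := by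
      have h : ⟪pu l p, pu (pv l) p⟫_ℝ + ⟪pu (pu l) p, pv l p⟫_ℝ = 0 :=
        d_inner_zero hD hp (dlu p hp) (dlv p hp) hF (1,0)
      rw [hsw] at h
      have hc : ⟪pu l p, pv (pu l) p⟫_ℝ = ⟪pv (pu l) p, pu l p⟫_ℝ := real_inner_comm _ _
      linarith
    have xn1 : ⟪pv (pu l) p, n p⟫_ℝ = b p := (hb p).symm
    have xn2 : ⟪pu (pu l) p, n p⟫_ℝ = a p := (ha p).symm
    -- derivatives of the normal
    have yl1 : ⟪l p, pu n p⟫_ℝ = 0 := by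
      have h : ⟪n p, pu l p⟫_ℝ + ⟪pu n p, l p⟫_ℝ = 0 :=
        d_inner_zero hD hp (dn p hp) (dl p hp) hnl (1,0)
      have := hnu p hp
      have hc : ⟪l p, pu n p⟫_ℝ = ⟪pu n p, l p⟫_ℝ := real_inner_comm _ _
      linarith
    have yl2 : ⟪l p, pv n p⟫_ℝ = 0 := by
      have h : ⟪n p, pv l p⟫_ℝ + ⟪pv n p, l p⟫_ℝ = 0 :=
        d_inner_zero hD hp (dn p hp) (dl p hp) hnl (0,1)
      have := hnv p hp
      have hc : ⟪l p, pv n p⟫_ℝ = ⟪pv n p, l p⟫_ℝ := real_inner_comm _ _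
      linarith
    have yn1 : ⟪n p, pu n p⟫_ℝ = 0 := by
      have h : ⟪n p, pu n p⟫_ℝ + ⟪pu n p, n p⟫_ℝ = 0 :=
        d_inner_one hD hp (dn p hp) (dn p hp) hn1 (1,0)
      have hc : ⟪n p, pu n p⟫_ℝ = ⟪pu n p, n p⟫_ℝ := real_inner_comm _ _
      linarith
    have yn2 : ⟪n p, pv n p⟫_ℝ = 0 := by
      have h : ⟪n p, pv n p⟫_ℝ + ⟪pv n p, n p⟫_ℝ = 0 :=
        d_inner_one hD hp (dn p hp) (dn p hp) hn1 (0,1)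
      have hc : ⟪n p, pv n p⟫_ℝ = ⟪pv n p, n p⟫_ℝ := real_inner_comm _ _
      linarith
    have yu1 : ⟪pu l p, pu n p⟫_ℝ = -(a p) := by
      have h : ⟪n p, pu (pu l) p⟫_ℝ + ⟪pu n p, pu l p⟫_ℝ = 0 :=
        d_inner_zero hD hp (dn p hp) (dlu p hp) hnu (1,0)
      have hc1 : ⟪n p, pu (pu l) p⟫_ℝ = ⟪pu (pu l) p, n p⟫_ℝ := real_inner_comm _ _
      have hc2 : ⟪pu l p, pu n p⟫_ℝ = ⟪pu n p, pu l p⟫_ℝ := real_inner_comm _ _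
      linarith [xn2]
    have yu2 : ⟪pu l p, pv n p⟫_ℝ = -(b p) := by
      have h : ⟪n p, pv (pu l) p⟫_ℝ + ⟪pv n p, pu l p⟫_ℝ = 0 :=
        d_inner_zero hD hp (dn p hp) (dlu p hp) hnu (0,1)
      have hc1 : ⟪n p, pv (pu l) p⟫_ℝ = ⟪pv (pu l) p, n p⟫_ℝ := real_inner_comm _ _
      have hc2 : ⟪pu l p, pv n p⟫_ℝ = ⟪pv n p, pu l p⟫_ℝ := real_inner_comm _ _
      linarith [xn1]
    have yv1 : ⟪pv l p, pu n p⟫_ℝ = -(b p) := by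
      have h : ⟪n p, pu (pv l) p⟫_ℝ + ⟪pu n p, pv l p⟫_ℝ = 0 :=
        d_inner_zero hD hp (dn p hp) (dlv p hp) hnv (1,0)
      rw [hsw] at h
      have hc1 : ⟪n p, pv (pu l) p⟫_ℝ = ⟪pv (pu l) p, n p⟫_ℝ := real_inner_comm _ _
      have hc2 : ⟪pv l p, pu n p⟫_ℝ = ⟪pu n p, pv l p⟫_ℝ := real_inner_comm _ _
      linarith [xn1]
    have hnvv : ⟪n p, pv (pv l) p⟫_ℝ = -(a p) := by
      have hm := hmin p hp
      have h0 : ⟪n p, pu (pu l) p + pv (pv l) p + (2 * E p) • l p⟫_ℝ = 0 := by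
        rw [hm, inner_zero_right]
      rw [inner_add_right, inner_add_right, real_inner_smul_right] at h0
      have hc1 : ⟪n p, pu (pu l) p⟫_ℝ = ⟪pu (pu l) p, n p⟫_ℝ := real_inner_comm _ _
      have := hnl p hp
      nlinarith [xn2]
    have yv2 : ⟪pv l p, pv n p⟫_ℝ = a p := by
      have h : ⟪n p, pv (pv l) p⟫_ℝ + ⟪pv n p, pv l p⟫_ℝ = 0 :=
        d_inner_zero hD hp (dn p hp) (dlv p hp) hnv (0,1)
      have hc2 : ⟪pv l p, pv n p⟫_ℝ = ⟪pv n p, pv l p⟫_ℝ := real_inner_comm _ _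
      linarith [hnvv]
    -- Parseval expansions
    have PV := parseval4 hEp (hunit p hp) (hEu p hp) (hEv p hp) (hF p hp) (hn1 p hp)
      (hnl p hp) (hnu p hp) (hnv p hp) (hlul p hp) (hlvl p hp)
    have Q1 : ⟪pv (pu l) p, pu n p⟫_ℝ
        = (Ev/2 * (-(a p)) + Eu/2 * (-(b p)))/(E p) := by
      rw [PV (pv (pu l) p) (pu n p), xl1, xu1, xv1, xn1, yl1, yu1, yv1, yn1]; ring
    have Q2 : ⟪pu (pu l) p, pv n p⟫_ℝ
        = (Ev/2 * (-(a p)) + Eu/2 * (-(b p)))/(E p) := by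
      rw [PV (pu (pu l) p) (pv n p), xl2, xu2, xv2, xn2, yl2, yu2, yv2, yn2]; ring
    have Q3 : ⟪pv (pu l) p, pv n p⟫_ℝ
        = (Ev/2 * (-(b p)) + Eu/2 * (a p))/(E p) := by
      rw [PV (pv (pu l) p) (pv n p), xl1, xu1, xv1, xn1, yl2, yu2, yv2, yn2]; ring
    have Q4 : ⟪pu (pu l) p, pu n p⟫_ℝ
        = (Eu/2 * (-(a p)) + Ev/2 * (b p))/(E p) := by
      rw [PV (pu (pu l) p) (pu n p), xl2, xu2, xv2, xn2, yl1, yu1, yv1, yn1]; ring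
    -- expansions of the derivatives of a and b
    have hpub : pu b p = ⟪pv (pu l) p, pu n p⟫_ℝ + ⟪pu (pv (pu l)) p, n p⟫_ℝ := by
      rw [funext hb]; exact fderiv_inner_apply (𝕜 := ℝ) (dluv p hp) (dn p hp) (1,0)
    have hpvb : pv b p = ⟪pv (pu l) p, pv n p⟫_ℝ + ⟪pv (pv (pu l)) p, n p⟫_ℝ := by
      rw [funext hb]; exact fderiv_inner_apply (𝕜 := ℝ) (dluv p hp) (dn p hp) (0,1)
    have hpua : pu a p = ⟪pu (pu l) p, pu n p⟫_ℝ + ⟪pu (pu (pu l)) p, n p⟫_ℝ := by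
      rw [funext ha]; exact fderiv_inner_apply (𝕜 := ℝ) (dluu p hp) (dn p hp) (1,0)
    have hpva : pv a p = ⟪pu (pu l) p, pv n p⟫_ℝ + ⟪pv (pu (pu l)) p, n p⟫_ℝ := by
      rw [funext ha]; exact fderiv_inner_apply (𝕜 := ℝ) (dluu p hp) (dn p hp) (0,1)
    -- symmetry of third derivatives
    have h3rd : pu (pv (pu l)) p = pv (pu (pu l)) p := schwarz_pupv hD cdlu hp
    -- the key third-derivative identity from minimality
    have hmg : ∀ q ∈ D, pv (pv l) q = -(pu (pu l) q) - (2 * E q) • l q := by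
      intro q hq
      have hm := hmin q hq
      have h0 : pv (pv l) q + (pu (pu l) q + (2 * E q) • l q) = 0 := by
        rw [← hm]; abel
      rw [add_eq_zero_iff_eq_neg] at h0
      rw [h0]; abel
    have key3 : ⟪pv (pv (pu l)) p, n p⟫_ℝ = -(⟪pu (pu (pu l)) p, n p⟫_ℝ) := by
      have s1 : pv (pv (pu l)) p = pv (pu (pv l)) p :=
        pd_congr hD (fun q hq => (hswD q hq).symm) hp (0,1)
      have s2 : pv (pu (pv l)) p = pu (pv (pv l)) p := (schwarz_pupv hD cdlv hp).symm
      have s3 : pu (pv (pv l)) p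
          = fderiv ℝ (fun q => -(pu (pu l) q) - (2 * E q) • l q) p (1,0) :=
        pd_congr hD hmg hp (1,0)
      have hB : DifferentiableAt ℝ (fun q => (2 * E q) • l q) p :=
        ((dE p hp).const_mul 2).smul (dl p hp)
      have hA : DifferentiableAt ℝ (fun q => -(pu (pu l) q)) p := (dluu p hp).neg
      have hf1 : fderiv ℝ (fun q => -(pu (pu l) q) - (2 * E q) • l q) p (1,0)
          = -(pu (pu (pu l)) p)
            - ((2 * E p) • pu l p + (fderiv ℝ (fun q => 2 * E q) p (1,0)) • l p) := by
        rw [fderiv_fun_sub hA hB, ContinuousLinearMap.sub_apply, fderiv_fun_neg,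
          fderiv_fun_smul ((dE p hp).const_mul 2) (dl p hp)]
        rw [ContinuousLinearMap.neg_apply, ContinuousLinearMap.add_apply,
          ContinuousLinearMap.smul_apply, ContinuousLinearMap.smulRight_apply]
        rfl
      rw [s1, s2, s3, hf1, inner_sub_left, inner_neg_left, inner_add_left,
        real_inner_smul_left, real_inner_smul_left]
      have hz1 : ⟪pu l p, n p⟫_ℝ = 0 := by
        rw [real_inner_comm]; exact hnu p hp
      have hz2 : ⟪l p, n p⟫_ℝ = 0 := by
        rw [real_inner_comm]; exact hnl p hp
      rw [hz1, hz2]; ring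
    -- combine
    have hthird1 : ⟪pu (pv (pu l)) p, n p⟫_ℝ = ⟪pv (pu (pu l)) p, n p⟫_ℝ := by rw [h3rd]
    have hQ12 : ⟪pv (pu l) p, pu n p⟫_ℝ = ⟪pu (pu l) p, pv n p⟫_ℝ := by rw [Q1, Q2]
    have hQ34 : ⟪pv (pu l) p, pv n p⟫_ℝ + ⟪pu (pu l) p, pu n p⟫_ℝ = 0 := by
      rw [Q3, Q4]; ring
    refine ⟨?_, ?_⟩
    · rw [hpub, hpva, hQ12, hthird1]
    · rw [hpvb, hpua, key3, Q3, Q4]; ring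
  -- conclusion: Cauchy-Riemann plus harmonicity
  intro p hp
  refine ⟨(CR p hp).1, (CR p hp).2, ?_, ?_⟩
  · -- a is harmonic
    have h1 : pu (pu a) p = -(pu (pv b) p) := by
      have hcon : fderiv ℝ (pu a) p (1,0)
          = fderiv ℝ (fun q => -(pv b q)) p (1,0) :=
        pd_congr hD (fun q hq => by have h := (CR q hq).2; linarith) hp (1,0)
      rw [show pu (pu a) p = fderiv ℝ (pu a) p (1,0) from rfl, hcon, fderiv_fun_neg,
        ContinuousLinearMap.neg_apply]
      rfl
    have h2 : pv (pv a) p = pv (pu b) p :=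
      pd_congr hD (fun q hq => (CR q hq).1.symm) hp (0,1)
    have h3 : pu (pv b) p = pv (pu b) p := schwarz_pupv hD cdb hp
    linarith only [h1, h2, h3]
  · -- b is harmonic
    have h1 : pu (pu b) p = pu (pv a) p :=
      pd_congr hD (fun q hq => (CR q hq).1) hp (1,0)
    have h2 : pv (pv b) p = -(pv (pu a) p) := by
      have hcon : fderiv ℝ (pv b) p (0,1)
          = fderiv ℝ (fun q => -(pu a q)) p (0,1) :=
        pd_congr hD (fun q hq => (CR q hq).2) hp (0,1)
      rw [show pv (pv b) p = fderiv ℝ (pv b) p (0,1) from rfl, hcon, fderiv_fun_neg,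
        ContinuousLinearMap.neg_apply]
      rfl
    have h3 : pu (pv a) p = pv (pu a) p := schwarz_pupv hD cda hp
    linarith only [h1, h2, h3]
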